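/- A family (x_α)_{α∈Λ^{<b}} in a normed space is absolutely summable if and only if the real family (1 + ‖x_α‖)_{α∈Λ^{<b}} is multipliable. -/

import Mathlib

open Set

noncomputable section

/-- Transfinite partial sums of a family indexed by a well-ordered set `Λ` with
least element `a` and supremum `b`.  `F γ` represents `Σ_{α ∈ Λ, α < γ} x α` for
`γ ∈ Λ ∪ {b}`:  the sum over the empty initial segment is `0`, the successor
recursion `F (S β) = x β + F β` holds, and at each limit element the partial
sums converge from the left. -/
def WOSumData {E : Type*} [SeminormedAddCommGroup E] {ι : Type*} [LinearOrder ι]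
    (Λ : Set ι) (a b : ι) (x F : ι → E) : Prop :=
  F a = 0 ∧
  (∀ β ∈ Λ, ∀ γ ∈ Λ ∪ {b}, β < γ → (∀ α ∈ Λ, α ≤ β ∨ γ ≤ α) → F γ = x β + F β) ∧
  (∀ γ ∈ Λ ∪ {b}, a < γ → (∀ β ∈ Λ, β < γ → ∃ α ∈ Λ, β < α ∧ α < γ) →
    ∀ ε > 0, ∃ β₀ ∈ Λ, β₀ < γ ∧ ∀ β ∈ Λ, β₀ ≤ β → β < γ → ‖F β - F γ‖ < ε)

/-- Transfinite partial products of a family indexed by a well-ordered set `Λ` with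
least element `a` and supremum `b`.  `F γ` represents `Π_{α ∈ Λ, α < γ} x α` for
`γ ∈ Λ ∪ {b}`:  the product over the empty initial segment is `1`, the successor
recursion `F (S β) = x β * F β` holds, and at each limit element the partial
products converge from the left. -/
def WOProdData {E : Type*} [NormedRing E] {ι : Type*} [LinearOrder ι]
    (Λ : Set ι) (a b : ι) (x F : ι → E) : Prop :=
  F a = 1 ∧
  (∀ β ∈ Λ, ∀ γ ∈ Λ ∪ {b}, β < γ → (∀ α ∈ Λ, α ≤ β ∨ γ ≤ α) → F γ = x β * F β) ∧
  (∀ γ ∈ Λ ∪ {b}, a < γ → (∀ β ∈ Λ, β < γ → ∃ α ∈ Λ, β < α ∧ α < γ) →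
    ∀ ε > 0, ∃ β₀ ∈ Λ, β₀ < γ ∧ ∀ β ∈ Λ, β₀ ≤ β → β < γ → ‖F β - F γ‖ < ε)

section Aux

variable {Λ : Set (WithTop ℝ)} {a b : WithTop ℝ}

private lemma one_add_sum_le_prod {s : Finset (WithTop ℝ)} {f : WithTop ℝ → ℝ}
    (hf : ∀ α ∈ s, 0 ≤ f α) :
    1 + ∑ α ∈ s, f α ≤ ∏ α ∈ s, (1 + f α) := by
  classical
  induction s using Finset.induction_on with
  | empty => simp
  | insert _ _ hns ih =>
    rename_i c s'
    have hc : 0 ≤ f c := hf c (Finset.mem_insert_self c s')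
    have hf' : ∀ α ∈ s', 0 ≤ f α := fun α hα => hf α (Finset.mem_insert_of_mem hα)
    have hS : 0 ≤ ∑ α ∈ s', f α := Finset.sum_nonneg hf'
    have hih := ih hf'
    rw [Finset.sum_insert hns, Finset.prod_insert hns]
    nlinarith

private lemma prod_one_add_le_exp {s : Finset (WithTop ℝ)} {f : WithTop ℝ → ℝ}
    (hf : ∀ α ∈ s, 0 ≤ f α) :
    ∏ α ∈ s, (1 + f α) ≤ Real.exp (∑ α ∈ s, f α) := by
  rw [Real.exp_sum]
  refine Finset.prod_le_prod (fun α hα => by linarith [hf α hα]) (fun α hα => ?_)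
  linarith [Real.add_one_le_exp (f α)]


private lemma sumdata_bound (hWF : Λ.IsWF) (ha : IsLeast Λ a) (hb : IsLUB Λ b)
    {w : WithTop ℝ → ℝ} (hw : ∀ α ∈ Λ, 0 ≤ w α) {F : WithTop ℝ → ℝ}
    (hF : WOSumData Λ a b w F) :
    ∀ γ ∈ Λ ∪ {b}, ∀ s : Finset (WithTop ℝ), ↑s ⊆ Λ → (∀ α ∈ s, α < γ) →
      ∑ α ∈ s, w α ≤ F γ := by
  classical
  obtain ⟨h0, hsucc, hlim⟩ := hF
  have hWF' : (Λ ∪ {b}).IsWF := hWF.union (Set.finite_singleton b).isWF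
  intro γ hγ
  refine hWF'.induction hγ (P := fun γ => ∀ s : Finset (WithTop ℝ), ↑s ⊆ Λ →
    (∀ α ∈ s, α < γ) → ∑ α ∈ s, w α ≤ F γ) ?_
  intro γ hγ IH s hsΛ hsγ
  by_cases hS : ∃ β ∈ Λ, β < γ ∧ ∀ α ∈ Λ, α ≤ β ∨ γ ≤ α
  · obtain ⟨β, hβΛ, hβγ, hgap⟩ := hS
    have hrec := hsucc β hβΛ γ hγ hβγ hgap
    have hsub : ∀ α ∈ s.erase β, α < β := by
      intro α hα
      have hαs := Finset.mem_of_mem_erase hα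
      have hαβ := Finset.ne_of_mem_erase hα
      rcases hgap α (hsΛ hαs) with h | h
      · exact lt_of_le_of_ne h hαβ
      · exact absurd (hsγ α hαs) (not_lt.2 h)
    have hIH : ∑ α ∈ s.erase β, w α ≤ F β :=
      IH β (Or.inl hβΛ) hβγ _ (fun α hα => hsΛ (Finset.mem_of_mem_erase hα)) hsub
    rw [hrec]
    by_cases hβs : β ∈ s
    · rw [← Finset.add_sum_erase _ _ hβs]
      exact add_le_add_right hIH _
    · rw [Finset.erase_eq_of_notMem hβs] at hIH
      have := hw β hβΛ
      linarith
  · by_cases haγ : a < γ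
    · push_neg at hS
      have hlim' : ∀ β ∈ Λ, β < γ → ∃ α ∈ Λ, β < α ∧ α < γ := by
        intro β hβ hβγ
        obtain ⟨α, hαΛ, hα⟩ := hS β hβ hβγ
        exact ⟨α, hαΛ, hα⟩
      refine le_of_forall_sub_le fun ε hε => ?_
      obtain ⟨β₀, hβ₀Λ, hβ₀γ, hest⟩ := hlim γ hγ haγ hlim' ε hε
      -- find β ∈ Λ with β₀ ≤ β < γ and all elements of s < β
      obtain ⟨β, hβΛ, hβ₀β, hβγ, hsβ⟩ :
          ∃ β ∈ Λ, β₀ ≤ β ∧ β < γ ∧ ∀ α ∈ s, α < β := by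
        rcases s.eq_empty_or_nonempty with rfl | hne
        · exact ⟨β₀, hβ₀Λ, le_rfl, hβ₀γ, by simp⟩
        · set m := s.max' hne with hm
          have hmΛ : m ∈ Λ := hsΛ (s.max'_mem hne)
          have hmγ : m < γ := hsγ _ (s.max'_mem hne)
          have hcΛ : max β₀ m ∈ Λ := by
            rcases max_cases β₀ m with ⟨h, _⟩ | ⟨h, _⟩ <;> rw [h] <;> assumption
          have hcγ : max β₀ m < γ := max_lt hβ₀γ hmγ
          obtain ⟨α, hαΛ, hcα, hαγ⟩ := hlim' _ hcΛ hcγ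
          exact ⟨α, hαΛ, le_trans (le_max_left _ _) hcα.le, hαγ,
            fun d hd => lt_of_le_of_lt (le_trans (s.le_max' d hd) (le_max_right _ _)) hcα⟩
      have h1 : ∑ α ∈ s, w α ≤ F β := IH β (Or.inl hβΛ) hβγ s hsΛ hsβ
      have h2 : ‖F β - F γ‖ < ε := hest β hβΛ hβ₀β hβγ
      rw [Real.norm_eq_abs, abs_lt] at h2
      linarith [h2.1, h2.2]
    · -- γ = a
      have hγa : γ = a := by
        rcases hγ with h | h
        · exact le_antisymm (not_lt.1 haγ) (ha.2 h)
        · simp only [mem_singleton_iff] at h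
          subst h
          exact le_antisymm (not_lt.1 haγ) (hb.1 ha.1)
      subst hγa
      have hse : s = ∅ := by
        refine Finset.eq_empty_of_forall_notMem fun α hα => ?_
        exact absurd (hsγ α hα) (not_lt.2 (ha.2 (hsΛ hα)))
      simp [hse, h0]


private lemma proddata_bound (hWF : Λ.IsWF) (ha : IsLeast Λ a) (hb : IsLUB Λ b)
    {y : WithTop ℝ → ℝ} (hy : ∀ α ∈ Λ, 1 ≤ y α) {G : WithTop ℝ → ℝ}
    (hG : WOProdData Λ a b y G) :
    ∀ γ ∈ Λ ∪ {b}, ∀ s : Finset (WithTop ℝ), ↑s ⊆ Λ → (∀ α ∈ s, α < γ) →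
      ∏ α ∈ s, y α ≤ G γ := by
  classical
  obtain ⟨h0, hsucc, hlim⟩ := hG
  have hWF' : (Λ ∪ {b}).IsWF := hWF.union (Set.finite_singleton b).isWF
  intro γ hγ
  refine hWF'.induction hγ (P := fun γ => ∀ s : Finset (WithTop ℝ), ↑s ⊆ Λ →
    (∀ α ∈ s, α < γ) → ∏ α ∈ s, y α ≤ G γ) ?_
  intro γ hγ IH s hsΛ hsγ
  by_cases hS : ∃ β ∈ Λ, β < γ ∧ ∀ α ∈ Λ, α ≤ β ∨ γ ≤ α
  · obtain ⟨β, hβΛ, hβγ, hgap⟩ := hS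
    have hrec := hsucc β hβΛ γ hγ hβγ hgap
    have hsub : ∀ α ∈ s.erase β, α < β := by
      intro α hα
      have hαs := Finset.mem_of_mem_erase hα
      have hαβ := Finset.ne_of_mem_erase hα
      rcases hgap α (hsΛ hαs) with h | h
      · exact lt_of_le_of_ne h hαβ
      · exact absurd (hsγ α hαs) (not_lt.2 h)
    have hIH : ∏ α ∈ s.erase β, y α ≤ G β :=
      IH β (Or.inl hβΛ) hβγ _ (fun α hα => hsΛ (Finset.mem_of_mem_erase hα)) hsub
    have hGβ1 : 1 ≤ G β := by
      simpa using IH β (Or.inl hβΛ) hβγ ∅ (by simp) (by simp)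
    have hyβ := hy β hβΛ
    rw [hrec]
    by_cases hβs : β ∈ s
    · rw [← Finset.mul_prod_erase _ _ hβs]
      exact mul_le_mul_of_nonneg_left hIH (by linarith)
    · rw [Finset.erase_eq_of_notMem hβs] at hIH
      nlinarith
  · by_cases haγ : a < γ
    · push_neg at hS
      have hlim' : ∀ β ∈ Λ, β < γ → ∃ α ∈ Λ, β < α ∧ α < γ := by
        intro β hβ hβγ
        obtain ⟨α, hαΛ, hα⟩ := hS β hβ hβγ
        exact ⟨α, hαΛ, hα⟩
      refine le_of_forall_sub_le fun ε hε => ?_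
      obtain ⟨β₀, hβ₀Λ, hβ₀γ, hest⟩ := hlim γ hγ haγ hlim' ε hε
      obtain ⟨β, hβΛ, hβ₀β, hβγ, hsβ⟩ :
          ∃ β ∈ Λ, β₀ ≤ β ∧ β < γ ∧ ∀ α ∈ s, α < β := by
        rcases s.eq_empty_or_nonempty with rfl | hne
        · exact ⟨β₀, hβ₀Λ, le_rfl, hβ₀γ, by simp⟩
        · set m := s.max' hne with hm
          have hmΛ : m ∈ Λ := hsΛ (s.max'_mem hne)
          have hmγ : m < γ := hsγ _ (s.max'_mem hne)
          have hcΛ : max β₀ m ∈ Λ := by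
            rcases max_cases β₀ m with ⟨h, _⟩ | ⟨h, _⟩ <;> rw [h] <;> assumption
          have hcγ : max β₀ m < γ := max_lt hβ₀γ hmγ
          obtain ⟨α, hαΛ, hcα, hαγ⟩ := hlim' _ hcΛ hcγ
          exact ⟨α, hαΛ, le_trans (le_max_left _ _) hcα.le, hαγ,
            fun d hd => lt_of_le_of_lt (le_trans (s.le_max' d hd) (le_max_right _ _)) hcα⟩
      have h1 : ∏ α ∈ s, y α ≤ G β := IH β (Or.inl hβΛ) hβγ s hsΛ hsβ
      have h2 : ‖G β - G γ‖ < ε := hest β hβΛ hβ₀β hβγ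
      rw [Real.norm_eq_abs, abs_lt] at h2
      linarith [h2.1, h2.2]
    · have hγa : γ = a := by
        rcases hγ with h | h
        · exact le_antisymm (not_lt.1 haγ) (ha.2 h)
        · simp only [mem_singleton_iff] at h
          subst h
          exact le_antisymm (not_lt.1 haγ) (hb.1 ha.1)
      subst hγa
      have hse : s = ∅ := by
        refine Finset.eq_empty_of_forall_notMem fun α hα => ?_
        exact absurd (hsγ α hα) (not_lt.2 (ha.2 (hsΛ hα)))
      simp [hse, h0]


/-- the set of finite partial sums with indices `< γ` -/
private def PS (Λ : Set (WithTop ℝ)) (w : WithTop ℝ → ℝ) (γ : WithTop ℝ) : Set ℝ :=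
  {t | ∃ s : Finset (WithTop ℝ), ↑s ⊆ Λ ∧ (∀ α ∈ s, α < γ) ∧ t = ∑ α ∈ s, w α}

private lemma PS_nonempty (Λ : Set (WithTop ℝ)) (w : WithTop ℝ → ℝ) (γ : WithTop ℝ) :
    (PS Λ w γ).Nonempty :=
  ⟨0, ∅, by simp, by simp, by simp⟩

private lemma exists_sumdata (ha : IsLeast Λ a) (hb : IsLUB Λ b)
    {w : WithTop ℝ → ℝ} (hw : ∀ α ∈ Λ, 0 ≤ w α) {M : ℝ}
    (hM : ∀ s : Finset (WithTop ℝ), ↑s ⊆ Λ → (∀ α ∈ s, α < b) → ∑ α ∈ s, w α ≤ M) :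
    WOSumData Λ a b w (fun γ => sSup (PS Λ w γ)) := by
  classical
  have hbdd : ∀ γ ∈ Λ ∪ {b}, BddAbove (PS Λ w γ) := by
    intro γ hγ
    have hγb : γ ≤ b := by
      rcases hγ with h | h
      · exact hb.1 h
      · exact le_of_eq h
    exact ⟨M, fun t ⟨s, hsΛ, hsγ, hts⟩ => hts ▸ hM s hsΛ
      (fun α hα => lt_of_lt_of_le (hsγ α hα) hγb)⟩
  have hmono : ∀ β γ : WithTop ℝ, β ≤ γ → PS Λ w β ⊆ PS Λ w γ := by
    intro β γ hβγ t ⟨s, hsΛ, hsβ, hts⟩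
    exact ⟨s, hsΛ, fun α hα => lt_of_lt_of_le (hsβ α hα) hβγ, hts⟩
  refine ⟨?_, ?_, ?_⟩
  · -- F a = 0
    have : PS Λ w a = {0} := by
      ext t
      constructor
      · rintro ⟨s, hsΛ, hsa, rfl⟩
        have : s = ∅ := Finset.eq_empty_of_forall_notMem fun α hα =>
          absurd (hsa α hα) (not_lt.2 (ha.2 (hsΛ hα)))
        simp [this]
      · rintro rfl
        exact ⟨∅, by simp, by simp, by simp⟩
    simp [this]
  · -- successor recursion
    intro β hβΛ γ hγ hβγ hgap
    have hbβ : BddAbove (PS Λ w β) := hbdd β (Or.inl hβΛ)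
    have hbγ : BddAbove (PS Λ w γ) := hbdd γ hγ
    refine le_antisymm ?_ ?_
    · refine csSup_le (PS_nonempty Λ w γ) ?_
      rintro t ⟨s, hsΛ, hsγ, rfl⟩
      have herase : (s.erase β : Set (WithTop ℝ)) ⊆ Λ :=
        fun α hα => hsΛ (Finset.mem_of_mem_erase hα)
      have hsub : ∀ α ∈ s.erase β, α < β := by
        intro α hα
        have hαs := Finset.mem_of_mem_erase hα
        have hαβ := Finset.ne_of_mem_erase hα
        rcases hgap α (hsΛ hαs) with h | h
        · exact lt_of_le_of_ne h hαβ
        · exact absurd (hsγ α hαs) (not_lt.2 h)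
      have hle : ∑ α ∈ s.erase β, w α ≤ sSup (PS Λ w β) :=
        le_csSup hbβ ⟨s.erase β, herase, hsub, rfl⟩
      by_cases hβs : β ∈ s
      · rw [← Finset.add_sum_erase _ _ hβs]
        linarith
      · rw [Finset.erase_eq_of_notMem hβs] at hle
        show ∑ α ∈ s, w α ≤ w β + sSup (PS Λ w β)
        linarith [hw β hβΛ]
    · show w β + sSup (PS Λ w β) ≤ sSup (PS Λ w γ)
      have h : sSup (PS Λ w β) ≤ sSup (PS Λ w γ) - w β := by
        refine csSup_le (PS_nonempty Λ w β) ?_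
        rintro t ⟨s, hsΛ, hsβ, rfl⟩
        have hβs : β ∉ s := fun h => lt_irrefl β (hsβ β h)
        have hmem : w β + ∑ α ∈ s, w α ∈ PS Λ w γ := by
          refine ⟨insert β s, ?_, ?_, ?_⟩
          · intro α hα
            simp only [Finset.coe_insert, Set.mem_insert_iff] at hα
            rcases hα with rfl | h
            · exact hβΛ
            · exact hsΛ h
          · intro α hα
            rcases Finset.mem_insert.1 hα with rfl | h
            · exact hβγ
            · exact lt_trans (hsβ α h) hβγ
          · rw [Finset.sum_insert hβs]
        linarith [le_csSup hbγ hmem]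
      linarith
  · -- limit continuity
    intro γ hγ haγ hlim ε hε
    have hbγ : BddAbove (PS Λ w γ) := hbdd γ hγ
    obtain ⟨t, ⟨s, hsΛ, hsγ, rfl⟩, hts⟩ :
        ∃ t ∈ PS Λ w γ, sSup (PS Λ w γ) - ε < t :=
      exists_lt_of_lt_csSup (PS_nonempty Λ w γ) (by linarith [sub_lt_self (sSup (PS Λ w γ)) hε])
    obtain ⟨β₀, hβ₀Λ, hβ₀γ, hsβ₀⟩ :
        ∃ β₀ ∈ Λ, β₀ < γ ∧ ∀ α ∈ s, α < β₀ := by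
      rcases s.eq_empty_or_nonempty with rfl | hne
      · exact ⟨a, ha.1, haγ, by simp⟩
      · have hmΛ : s.max' hne ∈ Λ := hsΛ (s.max'_mem hne)
        have hmγ : s.max' hne < γ := hsγ _ (s.max'_mem hne)
        obtain ⟨α, hαΛ, hmα, hαγ⟩ := hlim _ hmΛ hmγ
        exact ⟨α, hαΛ, hαγ, fun d hd => lt_of_le_of_lt (s.le_max' d hd) hmα⟩
    refine ⟨β₀, hβ₀Λ, hβ₀γ, fun β hβΛ hβ₀β hβγ => ?_⟩
    have h1 : ∑ α ∈ s, w α ≤ sSup (PS Λ w β) :=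
      le_csSup (hbdd β (Or.inl hβΛ)) ⟨s, hsΛ, fun α hα =>
        lt_of_lt_of_le (hsβ₀ α hα) hβ₀β, rfl⟩
    have h2 : sSup (PS Λ w β) ≤ sSup (PS Λ w γ) :=
      csSup_le_csSup hbγ (PS_nonempty Λ w β) (hmono β γ hβγ.le)
    rw [Real.norm_eq_abs, abs_lt]
    constructor <;> linarith


private lemma sumdata_exp {w F : WithTop ℝ → ℝ}
    (hF : WOSumData Λ a b w F) :
    WOProdData Λ a b (fun α => Real.exp (w α)) (fun γ => Real.exp (F γ)) := by
  obtain ⟨h0, hsucc, hlim⟩ := hF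
  refine ⟨by simp [h0], ?_, ?_⟩
  · intro β hβ γ hγ hβγ hgap
    simp only
    rw [hsucc β hβ γ hγ hβγ hgap, Real.exp_add]
  · intro γ hγ haγ hl ε hε
    have hc : ContinuousAt Real.exp (F γ) := Real.continuous_exp.continuousAt
    rw [Metric.continuousAt_iff] at hc
    obtain ⟨δ, hδ, hcd⟩ := hc ε hε
    obtain ⟨β₀, hβ₀Λ, hβ₀γ, hest⟩ := hlim γ hγ haγ hl δ hδ
    refine ⟨β₀, hβ₀Λ, hβ₀γ, fun β hβ h1 h2 => ?_⟩
    have hd : dist (F β) (F γ) < δ := by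
      rw [Real.dist_eq]
      simpa [Real.norm_eq_abs] using hest β hβ h1 h2
    have := hcd hd
    simpa [Real.dist_eq, Real.norm_eq_abs] using this

end Aux

/-- A family in a normed space is absolutely summable iff the real family
(1 + ‖x α‖) is multipliable. -/
theorem stmt7 {E : Type*} [NormedAddCommGroup E] [NormedSpace ℝ E]
    {Λ : Set (WithTop ℝ)} {a b : WithTop ℝ} (hWF : Λ.IsWF)
    (ha : IsLeast Λ a) (hb : IsLUB Λ b)
    (x : WithTop ℝ → E) :
    (∃ F : WithTop ℝ → ℝ, WOSumData Λ a b (fun α => ‖x α‖) F) ↔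
      (∃ G : WithTop ℝ → ℝ, WOProdData Λ a b (fun α => 1 + ‖x α‖) G) := by

  constructor
  · rintro ⟨F, hF⟩
    have hw0 : ∀ α ∈ Λ, (0:ℝ) ≤ ‖x α‖ := fun α _ => norm_nonneg _
    have hbd := sumdata_bound hWF ha hb hw0 hF b (Or.inr rfl)
    set w : WithTop ℝ → ℝ := fun α => Real.log (1 + ‖x α‖) with hwdef
    have hw : ∀ α ∈ Λ, 0 ≤ w α := fun α _ =>
      Real.log_nonneg (by linarith [norm_nonneg (x α)])
    have hM : ∀ s : Finset (WithTop ℝ), ↑s ⊆ Λ → (∀ α ∈ s, α < b) →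
        ∑ α ∈ s, w α ≤ F b := by
      intro s hsΛ hsb
      refine le_trans (Finset.sum_le_sum fun α _ => ?_) (hbd s hsΛ hsb)
      have h1 : (0:ℝ) < 1 + ‖x α‖ := by linarith [norm_nonneg (x α)]
      have := Real.log_le_sub_one_of_pos h1
      linarith
    have hF' := exists_sumdata ha hb hw hM
    have hprod := sumdata_exp hF'
    have hfun : (fun α => Real.exp (w α)) = (fun α => 1 + ‖x α‖) := by
      funext α
      exact Real.exp_log (by linarith [norm_nonneg (x α)])
    rw [hfun] at hprod
    exact ⟨_, hprod⟩
  · rintro ⟨G, hG⟩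
    have hy : ∀ α ∈ Λ, (1:ℝ) ≤ 1 + ‖x α‖ := fun α _ => by linarith [norm_nonneg (x α)]
    have hbd := proddata_bound hWF ha hb hy hG b (Or.inr rfl)
    have hw : ∀ α ∈ Λ, (0:ℝ) ≤ ‖x α‖ := fun α _ => norm_nonneg _
    have hM : ∀ s : Finset (WithTop ℝ), ↑s ⊆ Λ → (∀ α ∈ s, α < b) →
        ∑ α ∈ s, ‖x α‖ ≤ G b - 1 := by
      intro s hsΛ hsb
      have h1 := one_add_sum_le_prod (s := s) (f := fun α => ‖x α‖)
        (fun α _ => norm_nonneg _)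
      have h2 := hbd s hsΛ hsb
      linarith
    exact ⟨_, exists_sumdata ha hb hw hM⟩
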